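/- Let h ∈ ℕ^n be a nonincreasing supply profile and r ∈ ℕ^m a duration profile with each r_i ≤ n. Then there exists an m×n (0,1)-matrix A with row sums exactly r_i and column sums at most h_j if and only if for every k with 0 ≤ k ≤ n−1, ∑_{j=k+1}^{n} h_j ≥ ∑_{i=1}^{m} max(r_i − k, 0). -/

import Mathlib

open Finset

private lemma exists_top {ι : Type*} [DecidableEq ι] (r : ι → ℕ) :
    ∀ (c : ℕ) (t : Finset ι), c ≤ t.card →
      ∃ S, S ⊆ t ∧ S.card = c ∧ ∀ i ∈ S, ∀ j ∈ t, j ∉ S → r j ≤ r i := by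
  intro c
  induction c with
  | zero => intro t _; exact ⟨∅, empty_subset t, rfl, by simp⟩
  | succ c ih =>
    intro t hc
    have hne : t.Nonempty := card_pos.mp (by omega)
    obtain ⟨x, hxt, hxmax⟩ := t.exists_max_image r hne
    have hcard : c ≤ (t.erase x).card := by
      rw [card_erase_of_mem hxt]; omega
    obtain ⟨S, hSsub, hScard, htop⟩ := ih (t.erase x) hcard
    have hxS : x ∉ S := fun hx => (mem_erase.mp (hSsub hx)).1 rfl
    refine ⟨insert x S, ?_, ?_, ?_⟩
    · exact insert_subset hxt (hSsub.trans (erase_subset x t))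
    · rw [card_insert_of_notMem hxS, hScard]
    · intro i hi j hj hjS
      rcases mem_insert.mp hi with rfl | hiS
      · exact hxmax j hj
      · refine htop i hiS j (mem_erase.mpr ⟨?_, hj⟩) (fun hs => hjS (mem_insert_of_mem hs))
        rintro rfl; exact hjS (mem_insert_self _ _)

private lemma build : ∀ (n m : ℕ) (h : Fin n → ℕ) (r : Fin m → ℕ),
    (∀ i j : Fin n, i ≤ j → h j ≤ h i) →
    (∀ i, r i ≤ n) →
    (∀ k < n, ∑ i, (r i - k) ≤ ∑ j ∈ Finset.univ.filter (fun j : Fin n => k ≤ j.val), h j) →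
    ∃ A : Fin m → Fin n → ℕ,
      (∀ i j, A i j ≤ 1) ∧ (∀ i, ∑ j, A i j = r i) ∧ (∀ j, ∑ i, A i j ≤ h j) := by
  intro n
  induction n with
  | zero =>
    intro m h r _ hr _
    refine ⟨fun _ _ => 0, fun i j => by norm_num, fun i => ?_, fun j => by simp⟩
    have := hr i
    simp; omega
  | succ n ih =>
    intro m h r hmono hr hC
    -- notation
    set T : ℕ → ℕ := fun k => ∑ j ∈ Finset.univ.filter (fun j : Fin (n+1) => k ≤ j.val), h j with hT
    have hTif : ∀ k, T k = ∑ j : Fin (n+1), if k ≤ j.val then h j else 0 := by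
      intro k; rw [hT]; exact sum_filter _ _
    -- (F1) : split off column k
    have hF1 : ∀ (k : ℕ) (hk : k < n + 1), T k = h ⟨k, hk⟩ + T (k+1) := by
      intro k hk
      rw [hTif, hTif]
      have : ∀ j : Fin (n+1), (if k ≤ j.val then h j else 0)
          = (if j = ⟨k, hk⟩ then h j else 0) + (if k + 1 ≤ j.val then h j else 0) := by
        intro j
        have hjk : (j = (⟨k, hk⟩ : Fin (n+1))) ↔ j.val = k := by
          constructor
          · rintro rfl; rfl
          · intro hv; exact Fin.ext hv
        by_cases hj : j = (⟨k, hk⟩ : Fin (n+1))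
        · simp [hj]
        · have : j.val ≠ k := fun hv => hj (hjk.mpr hv)
          split_ifs <;> omega
      rw [sum_congr rfl (fun j _ => this j), sum_add_distrib]
      congr 1
      rw [sum_ite_eq' univ (⟨k, hk⟩ : Fin (n+1)) h]
      simp
    -- (F2) : peel one layer off demands
    have hF2 : ∀ (k : ℕ), ∑ i, (r i - k)
        = (∑ i, (r i - (k+1))) + (univ.filter (fun i => k + 1 ≤ r i)).card := by
      intro k
      rw [card_filter, ← sum_add_distrib]
      refine sum_congr rfl fun i _ => ?_
      split_ifs <;> omega
    -- mono at 0
    have hmono0 : ∀ j : Fin (n+1), h j ≤ h 0 := fun j => hmono 0 j (by simp [Fin.le_def])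
    -- choose the top set
    set P : Finset (Fin m) := univ.filter (fun i => 1 ≤ r i) with hP
    obtain ⟨S, hSP, hScard, htop⟩ := exists_top r (min (h 0) P.card) P (min_le_right _ _)
    have hSle : S.card ≤ h 0 := by rw [hScard]; exact min_le_left _ _
    -- whenever some positive-demand i is outside S, S is full
    have hfull : ∀ i : Fin m, 1 ≤ r i → i ∉ S → S.card = h 0 := by
      intro i hi hiS
      have hiP : i ∈ P := by simp [hP, hi]
      rcases le_or_gt P.card (h 0) with hle | hlt
      · exfalso
        have : S = P := eq_of_subset_of_card_le hSP (by rw [hScard]; omega)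
        exact hiS (this ▸ hiP)
      · rw [hScard]; omega
    -- reduced data
    set r' : Fin m → ℕ := fun i => r i - (if i ∈ S then 1 else 0) with hr'
    set h' : Fin n → ℕ := fun j => h j.succ with hh'
    -- T (k+1) as a Fin n sum
    have hF3 : ∀ k : ℕ, T (k+1) = ∑ j ∈ Finset.univ.filter (fun j : Fin n => k ≤ j.val), h' j := by
      intro k
      rw [hTif, sum_filter, Fin.sum_univ_succ]
      simp only [Fin.val_zero, Fin.val_succ, hh']
      have h0 : ¬ (k + 1 ≤ (0:ℕ)) := by omega
      simp only [h0, if_false]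
      rw [Nat.zero_add]
      refine sum_congr rfl fun j _ => ?_
      split_ifs <;> omega
    -- hypothesis: r' i ≤ n
    have hr'le : ∀ i, r' i ≤ n := by
      intro i
      by_cases hiS : i ∈ S
      · have := hr i; simp [hr', hiS]; omega
      · simp only [hr', hiS, if_neg, ite_false, Nat.sub_zero]
        by_contra hcon
        have hin : r i = n + 1 := by have := hr i; omega
        have hSfull : S.card = h 0 := hfull i (by omega) hiS
        have hiP : i ∈ P := by simp [hP]; omega
        -- all of S has demand ≥ n+1
        have hSbig : ∀ j ∈ S, n + 1 ≤ r j := by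
          intro j hj
          have := htop j hj i hiP hiS
          omega
        -- C at k = n gives contradiction
        have hCn : ∑ i', (r i' - n) ≤ T n := hC n (by omega)
        have hTn : T n = h ⟨n, by omega⟩ + T (n+1) := hF1 n (by omega)
        have hTn1 : T (n+1) = 0 := by
          rw [hTif]
          refine Finset.sum_eq_zero fun j _ => ?_
          have := j.isLt
          rw [if_neg (by omega)]
        have hlow : S.card + 1 ≤ ∑ i', (r i' - n) := by
          have hsub : insert i S ⊆ univ := subset_univ _
          calc S.card + 1 = ∑ i' ∈ insert i S, 1 := by
                rw [sum_const, card_insert_of_notMem hiS]; simp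
            _ ≤ ∑ i' ∈ insert i S, (r i' - n) := by
                refine sum_le_sum fun i' hi' => ?_
                rcases mem_insert.mp hi' with rfl | hi'S
                · omega
                · have := hSbig i' hi'S; omega
            _ ≤ ∑ i', (r i' - n) := sum_le_sum_of_subset hsub
        have := hmono0 ⟨n, by omega⟩
        rw [hTn, hTn1] at hCn
        omega
    -- hypothesis: tail condition for r', h'
    have hC' : ∀ k < n, ∑ i, (r' i - k)
        ≤ ∑ j ∈ Finset.univ.filter (fun j : Fin n => k ≤ j.val), h' j := by
      intro k hk
      rw [← hF3]
      set W : Finset (Fin m) := univ.filter (fun i => i ∉ S ∧ k + 1 ≤ r i) with hW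
      have hsplit : ∑ i, (r' i - k) = (∑ i, (r i - (k+1))) + W.card := by
        rw [hW, card_filter, ← sum_add_distrib]
        refine sum_congr rfl fun i _ => ?_
        simp only [hr']
        by_cases hiS : i ∈ S
        · simp only [hiS, if_true, not_true, false_and, if_false]; omega
        · simp only [hiS, if_false, not_false_iff, true_and]
          split_ifs <;> omega
      rw [hsplit]
      rcases Finset.eq_empty_or_nonempty W with hWe | ⟨i₀, hi₀⟩
      · rw [hWe, card_empty, Nat.add_zero]
        exact hC (k+1) (by omega)
      · obtain ⟨hi₀S, hi₀r⟩ := (mem_filter.mp hi₀).2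
        have hSfull : S.card = h 0 := hfull i₀ (by omega) hi₀S
        have hiP : i₀ ∈ P := by simp [hP]; omega
        have hSbig : ∀ j ∈ S, k + 1 ≤ r j := by
          intro j hj
          have := htop j hj i₀ hiP hi₀S
          omega
        -- S ∪ W ⊆ {i | k+1 ≤ r i}, disjoint
        have hdisj : Disjoint S W := by
          rw [disjoint_left]
          intro a haS haW
          exact ((mem_filter.mp haW).2).1 haS
        have hsub : S ∪ W ⊆ univ.filter (fun i => k + 1 ≤ r i) := by
          intro a ha
          rcases mem_union.mp ha with haS | haW
          · exact mem_filter.mpr ⟨mem_univ a, hSbig a haS⟩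
          · exact mem_filter.mpr ⟨mem_univ a, ((mem_filter.mp haW).2).2⟩
        have hcards : h 0 + W.card ≤ (univ.filter (fun i => k + 1 ≤ r i)).card := by
          have := card_le_card hsub
          rw [card_union_of_disjoint hdisj, hSfull] at this
          exact this
        have hCk : ∑ i', (r i' - k) ≤ T k := hC k (by omega)
        have hTk : T k = h ⟨k, by omega⟩ + T (k+1) := hF1 k (by omega)
        have hhk : h ⟨k, by omega⟩ ≤ h 0 := hmono0 _
        have hF2k := hF2 k
        rw [hF2k, hTk] at hCk
        omega
    -- monotonicity for h'
    have hmono' : ∀ i j : Fin n, i ≤ j → h' j ≤ h' i := by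
      intro i j hij
      refine hmono i.succ j.succ ?_
      simp only [Fin.le_def, Fin.val_succ] at hij ⊢
      omega
    obtain ⟨A', hA'1, hA'row, hA'col⟩ := ih m h' r' hmono' hr'le hC'
    refine ⟨fun i => Fin.cons (if i ∈ S then 1 else 0) (A' i), ?_, ?_, ?_⟩
    · intro i j
      refine Fin.cases ?_ ?_ j
      · simp only [Fin.cons_zero]; split_ifs <;> omega
      · intro j'; simp only [Fin.cons_succ]; exact hA'1 i j'
    · intro i
      rw [Fin.sum_cons, hA'row i]
      by_cases hiS : i ∈ S
      · have : 1 ≤ r i := by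
          have := hSP hiS
          simp [hP] at this; omega
        simp [hr', hiS]; omega
      · simp [hr', hiS]
    · intro j
      refine Fin.cases ?_ ?_ j
      · simp only [Fin.cons_zero]
        calc ∑ i, (if i ∈ S then 1 else 0) = S.card := by
              rw [← card_filter]; congr 1; simp [Finset.filter_mem_eq_inter]
          _ ≤ h 0 := hSle
      · intro j'
        simp only [Fin.cons_succ]
        exact hA'col j'

theorem stmt0 (m n : ℕ) (h : Fin n → ℕ) (r : Fin m → ℕ)
    (hmono : ∀ i j : Fin n, i ≤ j → h j ≤ h i)
    (hr : ∀ i, r i ≤ n) :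
    (∃ A : Fin m → Fin n → ℕ,
      (∀ i j, A i j ≤ 1) ∧
      (∀ i, ∑ j, A i j = r i) ∧
      (∀ j, ∑ i, A i j ≤ h j)) ↔
    (∀ k < n,
      ∑ i, (r i - k) ≤ ∑ j ∈ Finset.univ.filter (fun j : Fin n => k ≤ j.val), h j) := by
  constructor
  · rintro ⟨A, hA1, hArow, hAcol⟩ k hk
    have hhead : ∀ i, ∑ j ∈ univ.filter (fun j : Fin n => ¬ k ≤ j.val), A i j ≤ k := by
      intro i
      calc ∑ j ∈ univ.filter (fun j : Fin n => ¬ k ≤ j.val), A i j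
          ≤ ∑ j ∈ univ.filter (fun j : Fin n => ¬ k ≤ j.val), 1 :=
            sum_le_sum fun j _ => hA1 i j
        _ = (univ.filter (fun j : Fin n => ¬ k ≤ j.val)).card := by rw [sum_const]; simp
        _ ≤ (Finset.range k).card := by
            refine card_le_card_of_injOn Fin.val ?_ ?_
            · intro j hj
              have := (mem_filter.mp hj).2
              rw [Finset.mem_coe, Finset.mem_range]; omega
            · intro a _ b _ hab
              exact Fin.ext hab
        _ = k := card_range k
    have hterm : ∀ i, r i - k ≤ ∑ j ∈ univ.filter (fun j : Fin n => k ≤ j.val), A i j := by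
      intro i
      have hsplit := sum_filter_add_sum_filter_not univ (fun j : Fin n => k ≤ j.val) (A i)
      have := hArow i
      have := hhead i
      omega
    calc ∑ i, (r i - k) ≤ ∑ i, ∑ j ∈ univ.filter (fun j : Fin n => k ≤ j.val), A i j :=
          sum_le_sum fun i _ => hterm i
      _ = ∑ j ∈ univ.filter (fun j : Fin n => k ≤ j.val), ∑ i, A i j := sum_comm
      _ ≤ ∑ j ∈ univ.filter (fun j : Fin n => k ≤ j.val), h j :=
          sum_le_sum fun j _ => hAcol j
  · exact build n m h r hmono hr
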